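/- Let A, B be positive definite d×d matrices, with A⁻¹ ⪯ βI and B⁻¹ ⪰ αI for α, β > 0. Then the operator norm of A^{−1/2}(A^{1/2} B A^{1/2})^{1/2} A^{−1/2} is at most √(β/α). -/

import Mathlib

open scoped Matrix.Norms.L2Operator

lemma euclid_norm_sq {d : ℕ} (w : Fin d → ℝ) :
    ‖(WithLp.equiv 2 (Fin d → ℝ)).symm w‖ ^ 2 = dotProduct w w := by
  rw [EuclideanSpace.norm_eq, Real.sq_sqrt (by positivity)]
  simp [dotProduct, sq]

/-- Gaussian case of Caffarelli's contraction theorem: `S` is the principal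
square root of `A` and `T` that of `A^{1/2} B A^{1/2}`, so `S⁻¹ * T * S⁻¹` is
the Jacobian of the optimal transport map from `N(0,A)` to `N(0,B)`. -/
theorem stmt_12 {d : ℕ} (α β : ℝ) (hα : 0 < α) (hβ : 0 < β)
    (A B S T : Matrix (Fin d) (Fin d) ℝ)
    (hA : A.PosDef) (hB : B.PosDef)
    (hAβ : (β • 1 - A⁻¹).PosSemidef) (hBα : (B⁻¹ - α • 1).PosSemidef)
    (hS : S.PosDef) (hSA : S * S = A)
    (hT : T.PosSemidef) (hTB : T * T = S * B * S) :
    ‖S⁻¹ * T * S⁻¹‖ ≤ Real.sqrt (β / α) := by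
  set M := S⁻¹ * T * S⁻¹ with hMdef
  have hSdet : IsUnit S.det := hS.det_pos.ne'.isUnit
  have hTdet : IsUnit T.det := by
    have h2 : T.det * T.det = S.det * B.det * S.det := by
      rw [← Matrix.det_mul, hTB, Matrix.det_mul, Matrix.det_mul]
    have h3 : 0 < T.det * T.det := by
      rw [h2]; have := hS.det_pos; have := hB.det_pos; positivity
    exact (isUnit_iff_ne_zero).2 fun h => by simp [h] at h3
  have hSS : S⁻¹ * S = 1 := Matrix.nonsing_inv_mul S hSdet
  have hSS' : S * S⁻¹ = 1 := Matrix.mul_nonsing_inv S hSdet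
  have hTT : T⁻¹ * T = 1 := Matrix.nonsing_inv_mul T hTdet
  have hTT' : T * T⁻¹ = 1 := Matrix.mul_nonsing_inv T hTdet
  -- key identity: M * B⁻¹ * M = A⁻¹
  have hSBSinv : S⁻¹ * B⁻¹ * S⁻¹ = T⁻¹ * T⁻¹ := by
    rw [← Matrix.mul_inv_rev T T, hTB, Matrix.mul_inv_rev (S * B) S,
      Matrix.mul_inv_rev S B, mul_assoc]
  have hkey : M * B⁻¹ * M = A⁻¹ := by
    have : M * B⁻¹ * M = S⁻¹ * (T * (S⁻¹ * B⁻¹ * S⁻¹) * T) * S⁻¹ := by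
      rw [hMdef]; noncomm_ring
    rw [this, hSBSinv, ← hSA, Matrix.mul_inv_rev]
    calc S⁻¹ * (T * (T⁻¹ * T⁻¹) * T) * S⁻¹
        = S⁻¹ * ((T * T⁻¹) * (T⁻¹ * T)) * S⁻¹ := by noncomm_ring
      _ = S⁻¹ * S⁻¹ := by rw [hTT, hTT', mul_one, mul_one]
  -- M is symmetric
  have hMH : M.IsHermitian := by
    have h1 : (S⁻¹).IsHermitian := hS.isHermitian.inv
    have h2 : T.IsHermitian := hT.1
    unfold M
    unfold Matrix.IsHermitian at *
    rw [Matrix.conjTranspose_mul, Matrix.conjTranspose_mul, h1, h2, mul_assoc]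
  -- main vector inequality : α * ‖M x‖² ≤ β * ‖x‖²
  have hvec : ∀ v : Fin d → ℝ,
      α * dotProduct (M.mulVec v) (M.mulVec v) ≤ β * dotProduct v v := by
    intro v
    have h1 := hBα.dotProduct_mulVec_nonneg (M.mulVec v)
    have h2 := hAβ.dotProduct_mulVec_nonneg v
    simp only [star_trivial, Matrix.sub_mulVec, dotProduct_sub,
      Matrix.smul_mulVec, Matrix.one_mulVec, dotProduct_smul,
      smul_eq_mul, sub_nonneg] at h1 h2
    have h3 : dotProduct (M.mulVec v) (B⁻¹.mulVec (M.mulVec v))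
        = dotProduct v (A⁻¹.mulVec v) := by
      rw [← hkey]
      have h4 : Matrix.mulVec (M * B⁻¹ * M) v = Matrix.mulVec M (B⁻¹.mulVec (M.mulVec v)) := by
        simp only [Matrix.mulVec_mulVec, mul_assoc]
      rw [h4, Matrix.dotProduct_mulVec v M, ← Matrix.mulVec_transpose,
        ← Matrix.conjTranspose_eq_transpose_of_trivial, hMH.eq]
    calc α * dotProduct (M.mulVec v) (M.mulVec v)
        ≤ dotProduct (M.mulVec v) (B⁻¹.mulVec (M.mulVec v)) := h1
      _ = dotProduct v (A⁻¹.mulVec v) := h3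
      _ ≤ β * dotProduct v v := h2
  -- conclude via operator norm
  rw [Matrix.cstar_norm_def]
  refine ContinuousLinearMap.opNorm_le_bound _ (Real.sqrt_nonneg _) fun x => ?_
  set v : Fin d → ℝ := WithLp.equiv 2 (Fin d → ℝ) x with hv
  have hx : x = (WithLp.equiv 2 (Fin d → ℝ)).symm v := rfl
  rw [hx]; change ‖(WithLp.equiv 2 (Fin d → ℝ)).symm (Matrix.toLin' M v)‖ ≤ _; rw [Matrix.toLin'_apply]
  have hn1 : ‖(WithLp.equiv 2 (Fin d → ℝ)).symm (M.mulVec v)‖ ^ 2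
      = dotProduct (M.mulVec v) (M.mulVec v) := euclid_norm_sq _
  have hn2 : ‖(WithLp.equiv 2 (Fin d → ℝ)).symm v‖ ^ 2
      = dotProduct v v := euclid_norm_sq _
  have hineq := hvec v
  rw [← hn1, ← hn2] at hineq
  have hba : (0:ℝ) ≤ β / α := le_of_lt (div_pos hβ hα)
  rw [← Real.sqrt_sq (norm_nonneg ((WithLp.equiv 2 (Fin d → ℝ)).symm (M.mulVec v))),
    ← Real.sqrt_sq (norm_nonneg ((WithLp.equiv 2 (Fin d → ℝ)).symm v)),
    ← Real.sqrt_mul hba]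
  apply Real.sqrt_le_sqrt
  rw [div_mul_eq_mul_div, le_div_iff₀ hα]
  nlinarith [hineq]
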